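/- In every 2-connected bipartite outerplanar graph that is not a single cycle, there exists an inner face whose boundary cycle (v_1, v_2, ..., v_{2i}) has d_G(v_j) = 2 for all 2 ≤ j ≤ 2i − 1 and d_G(v_1), d_G(v_{2i}) ≥ 3, and this face has even length 2i ≥ 4. -/

import Mathlib

variable {V : Type*} [Fintype V] [DecidableEq V]

/-- Out-degree of `v` in the digraph (arc set) `D`. -/
def outDeg (D : Finset (V × V)) (v : V) : ℕ := (D.filter fun a => a.1 = v).card

/-- In-degree of `v` in the digraph (arc set) `D`. -/
def inDeg (D : Finset (V × V)) (v : V) : ℕ := (D.filter fun a => a.2 = v).card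

/-- An arc set is Eulerian if every vertex has equal in- and out-degree. -/
def IsEulerian (H : Finset (V × V)) : Prop := ∀ v, outDeg H v = inDeg H v

instance (H : Finset (V × V)) : Decidable (IsEulerian H) := by
  unfold IsEulerian; infer_instance

/-- The Eulerian subdigraphs of `D`. -/
def eulerianSubs (D : Finset (V × V)) : Finset (Finset (V × V)) :=
  D.powerset.filter IsEulerian

/-- `D` is an AT-orientation: the number of even Eulerian subdigraphs differs from
the number of odd ones. -/
def IsAT (D : Finset (V × V)) : Prop :=
  ((eulerianSubs D).filter fun H => Even H.card).card ≠
    ((eulerianSubs D).filter fun H => Odd H.card).card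

/-- `D` is an orientation of the graph `G`: every arc is an edge of `G`,
and each edge of `G` gets exactly one direction. -/
def IsOrientation (G : SimpleGraph V) (D : Finset (V × V)) : Prop :=
  (∀ a ∈ D, G.Adj a.1 a.2) ∧ ∀ u v : V, G.Adj u v → ((u, v) ∈ D ↔ (v, u) ∉ D)

/-- `D` contains a directed closed walk, equivalently a directed cycle. -/
def HasDirCycle (D : Finset (V × V)) : Prop :=
  ∃ (a : V) (l : List V), List.Chain (fun u v => (u, v) ∈ D) a (l ++ [a])

/-- Outerplanar: the vertices can be placed at distinct positions on a circle so that
all edges are pairwise noncrossing chords. -/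
def Outerplanar (G : SimpleGraph V) : Prop :=
  ∃ p : V → ℕ, Function.Injective p ∧ ∀ a b c d : V, G.Adj a b → G.Adj c d →
    ¬ (p a < p c ∧ p c < p b ∧ p b < p d)

/-- 2-connected: at least 3 vertices, connected, and deleting any vertex leaves it connected. -/
def TwoConnected (G : SimpleGraph V) : Prop :=
  3 ≤ Fintype.card V ∧ G.Connected ∧ ∀ v : V, (SimpleGraph.induce {w | w ≠ v} G).Connected

/-- `G` is a cycle: connected and 2-regular. -/
def IsCycleGraph (G : SimpleGraph V) [DecidableRel G.Adj] : Prop :=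
  G.Connected ∧ ∀ v, G.degree v = 2

/-- The arcs of a path/walk given by a list of vertices. -/
def pathArcs (l : List V) : Finset (V × V) := (l.zip l.tail).toFinset

/-- Weighted out-degree. -/
def wOutDeg (D : Finset (V × V)) (w : V × V → ℕ) (v : V) : ℕ :=
  ∑ a ∈ D.filter (fun a => a.1 = v), w a

/-- Weighted in-degree. -/
def wInDeg (D : Finset (V × V)) (w : V × V → ℕ) (v : V) : ℕ :=
  ∑ a ∈ D.filter (fun a => a.2 = v), w a

/-- Weighted Eulerian subdigraph. -/
def IsWEulerian (H : Finset (V × V)) (w : V × V → ℕ) : Prop :=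
  ∀ v, wOutDeg H w v = wInDeg H w v


section EarProof

private lemma fin2_iff {x y z : Fin 2} (h : x ≠ y) : (x = z ↔ ¬ y = z) := by
  revert h; revert x y z
  decide

private lemma exists_cross_edge (G : SimpleGraph V) (hconn : G.Connected)
    (S : Set V) (x y : V) (hx : x ∈ S) (hy : y ∉ S) :
    ∃ u w, G.Adj u w ∧ u ∈ S ∧ w ∉ S := by
  obtain ⟨q⟩ := hconn.preconnected x y
  obtain ⟨d, _, h1, h2⟩ := q.exists_boundary_dart S hx hy
  exact ⟨d.toProd.1, d.toProd.2, d.adj, h1, h2⟩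

private lemma exists_cross_edge_avoid (G : SimpleGraph V) {a : V}
    (hc : (SimpleGraph.induce {w | w ≠ a} G).Connected)
    (S : Set V) (x y : V) (hxa : x ≠ a) (hya : y ≠ a) (hx : x ∈ S) (hy : y ∉ S) :
    ∃ u w, G.Adj u w ∧ u ∈ S ∧ w ∉ S ∧ u ≠ a ∧ w ≠ a := by
  obtain ⟨q⟩ := hc.preconnected ⟨x, hxa⟩ ⟨y, hya⟩
  obtain ⟨d, _, h1, h2⟩ := q.exists_boundary_dart {z : {w : V | w ≠ a} | (z : V) ∈ S} hx hy
  exact ⟨d.toProd.1, d.toProd.2, d.adj, h1, h2, d.toProd.1.2, d.toProd.2.2⟩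

private lemma consec_adj (G : SimpleGraph V) (v : ℕ → V) (n : ℕ)
    (hinj : ∀ i < n, ∀ j < n, v i = v j → i = j)
    (hsurj : ∀ x : V, ∃ i < n, v i = x)
    (hcross : ∀ i j k l : ℕ, i < n → j < n → k < n → l < n →
      G.Adj (v i) (v j) → G.Adj (v k) (v l) → ¬(i < k ∧ k < j ∧ j < l))
    (hconn : G.Connected)
    (hconn' : ∀ a : V, (SimpleGraph.induce {w | w ≠ a} G).Connected)
    (i : ℕ) (hi : i + 1 < n) : G.Adj (v i) (v (i + 1)) := by
  classical
  have hin : i < n := by omega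
  have hex : ∃ w, ∃ j k, j < n ∧ k < n ∧ j ≤ i ∧ i < k ∧ G.Adj (v j) (v k) ∧ k - j = w := by
    obtain ⟨u, w, huw, hu, hw⟩ := exists_cross_edge G hconn
      {x | ∃ j, j ≤ i ∧ j < n ∧ v j = x} (v i) (v (i+1))
      ⟨i, le_refl i, hin, rfl⟩
      (by rintro ⟨j, hj1, hj2, hj3⟩; have := hinj j hj2 (i+1) hi hj3; omega)
    obtain ⟨j, hj1, hj2, rfl⟩ := hu
    obtain ⟨k, hk, rfl⟩ := hsurj w
    have hik : i < k := by
      by_contra h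
      exact hw ⟨k, by omega, hk, rfl⟩
    exact ⟨k - j, j, k, hj2, hk, hj1, hik, huw, rfl⟩
  obtain ⟨a, b, han, hbn, hai, hib, hadjab, hweq⟩ := Nat.find_spec hex
  have hmin : ∀ j k, j < n → k < n → j ≤ i → i < k → G.Adj (v j) (v k) → b - a ≤ k - j := by
    intro j k h1 h2 h3 h4 h5
    have := Nat.find_min' hex ⟨j, k, h1, h2, h3, h4, h5, rfl⟩
    omega
  have hae : a = i := by
    by_contra hne
    have hal : a < i := by omega
    obtain ⟨u, w, huw, hu, hw', hua, hwa⟩ := exists_cross_edge_avoid G (hconn' (v a))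
      {x | ∃ j, a < j ∧ j ≤ i ∧ v j = x} (v i) (v (i+1))
      (fun h => by have := hinj i hin a han h; omega)
      (fun h => by have := hinj (i+1) hi a han h; omega)
      ⟨i, hal, le_refl i, rfl⟩
      (by rintro ⟨j, hj1, hj2, hj3⟩
          have := hinj j (by omega) (i+1) hi hj3; omega)
    obtain ⟨j', hj1, hj2, rfl⟩ := hu
    have hj'n : j' < n := by omega
    obtain ⟨k, hk, rfl⟩ := hsurj w
    have hka : k ≠ a := fun h => hwa (by rw [h])
    have hknot : ¬(a < k ∧ k ≤ i) := fun h => hw' ⟨k, h.1, h.2, rfl⟩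
    rcases lt_or_ge i k with hik | hki
    · have h1 : b - a ≤ k - j' := hmin j' k hj'n hk hj2 hik huw
      rcases lt_or_ge b k with h2 | h2
      · exact hcross a b j' k han hbn hj'n hk hadjab huw ⟨by omega, by omega, h2⟩
      · omega
    · have hklt : k < a := by omega
      exact hcross k j' a b hk hj'n han hbn huw.symm hadjab ⟨hklt, by omega, by omega⟩
  have hae' : i = a := hae.symm
  clear hae
  subst hae'
  have hbe : b = i + 1 := by
    by_contra hne
    have hbl : i + 1 < b := by omega
    obtain ⟨u, w, huw, hu, hw', hub, hwb⟩ := exists_cross_edge_avoid G (hconn' (v b))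
      {x | ∃ k, i < k ∧ k < b ∧ v k = x} (v (i+1)) (v i)
      (fun h => by have := hinj (i+1) hi b hbn h; omega)
      (fun h => by have := hinj i hin b hbn h; omega)
      ⟨i+1, by omega, hbl, rfl⟩
      (by rintro ⟨k, hk1, hk2, hk3⟩
          have := hinj k (by omega) i hin hk3; omega)
    obtain ⟨k', hk1, hk2, rfl⟩ := hu
    have hk'n : k' < n := by omega
    obtain ⟨m, hm, rfl⟩ := hsurj w
    have hmb : m ≠ b := fun h => hwb (by rw [h])
    have hmnot : ¬(i < m ∧ m < b) := fun h => hw' ⟨m, h.1, h.2, rfl⟩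
    rcases lt_or_ge m i with hlt | hge
    · exact hcross m k' i b hm hk'n hin hbn huw.symm hadjab ⟨hlt, hk1, hk2⟩
    · by_cases hmi : m = i
      · subst hmi
        have := hmin m k' hm hk'n (le_refl m) hk1 huw.symm
        omega
      · have hbm : b < m := by omega
        exact hcross i b k' m hin hbn hk'n hm hadjab huw ⟨hk1, hk2, hbm⟩
  rw [← hbe]
  exact hadjab

private lemma wrap_adj (G : SimpleGraph V) (v : ℕ → V) (n : ℕ) (hn : 3 ≤ n)
    (hinj : ∀ i < n, ∀ j < n, v i = v j → i = j)
    (hsurj : ∀ x : V, ∃ i < n, v i = x)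
    (hcross : ∀ i j k l : ℕ, i < n → j < n → k < n → l < n →
      G.Adj (v i) (v j) → G.Adj (v k) (v l) → ¬(i < k ∧ k < j ∧ j < l))
    (hconn : G.Connected)
    (hconn' : ∀ a : V, (SimpleGraph.induce {w | w ≠ a} G).Connected) :
    G.Adj (v 0) (v (n - 1)) := by
  classical
  have hex : ∃ t, G.Adj (v 0) (v (n - 1 - t)) := by
    obtain ⟨u, w, huw, hu, hw⟩ := exists_cross_edge G hconn {x | x = v 0} (v 0) (v 1) rfl
      (fun h => by have := hinj 1 (by omega) 0 (by omega) h; omega)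
    have hu' : u = v 0 := hu
    subst hu'
    obtain ⟨k, hk, rfl⟩ := hsurj w
    have hk0 : k ≠ 0 := fun h => hw (by rw [h]; exact rfl)
    refine ⟨n - 1 - k, ?_⟩
    have hsk : n - 1 - (n - 1 - k) = k := by omega
    rw [hsk]
    exact huw
  have hspec := Nat.find_spec hex
  set t0 := Nat.find hex with ht0
  set B := n - 1 - t0 with hBdef
  have hBn : B < n := by omega
  have hadjB : G.Adj (v 0) (v B) := hspec
  have hB0 : B ≠ 0 := by
    intro h
    rw [h] at hadjB
    exact G.loopless.irrefl _ hadjB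
  have hmax : ∀ k, k < n → B < k → ¬ G.Adj (v 0) (v k) := by
    intro k hk hBk hadjk
    have h1 : n - 1 - k < t0 := by omega
    apply Nat.find_min hex h1
    have hsk : n - 1 - (n - 1 - k) = k := by omega
    rw [hsk]
    exact hadjk
  by_contra hcon
  have hBlt : B < n - 1 := by
    rcases lt_or_eq_of_le (by omega : B ≤ n - 1) with h | h
    · exact h
    · rw [h] at hadjB; exact absurd hadjB hcon
  obtain ⟨u, w, huw, hu, hw', hub, hwb⟩ := exists_cross_edge_avoid G (hconn' (v B))
    {x | ∃ m, B < m ∧ m < n ∧ v m = x} (v (B+1)) (v 0)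
    (fun h => by have := hinj (B+1) (by omega) B hBn h; omega)
    (fun h => by have := hinj 0 (by omega) B hBn h; omega)
    ⟨B+1, by omega, by omega, rfl⟩
    (by rintro ⟨m, hm1, hm2, hm3⟩; have := hinj m hm2 0 (by omega) hm3; omega)
  obtain ⟨m, hm1, hm2, rfl⟩ := hu
  obtain ⟨m', hm', rfl⟩ := hsurj w
  have hm'B : m' ≠ B := fun h => hwb (by rw [h])
  have hm'lt : m' < B := by
    have : ¬(B < m' ∧ m' < n) := fun h => hw' ⟨m', h.1, h.2, rfl⟩
    omega
  by_cases hm'0 : m' = 0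
  · rw [hm'0] at huw
    exact hmax m hm2 hm1 huw.symm
  · exact hcross 0 B m' m (by omega) hBn hm' hm2 hadjB huw.symm ⟨by omega, hm'lt, hm1⟩

private lemma degree_eq_two (G : SimpleGraph V) [DecidableRel G.Adj] {x α β : V}
    (hab : α ≠ β) (h1 : G.Adj x α) (h2 : G.Adj x β)
    (h3 : ∀ y, G.Adj x y → y = α ∨ y = β) : G.degree x = 2 := by
  have hset : G.neighborFinset x = {α, β} := by
    ext y
    simp only [SimpleGraph.mem_neighborFinset, Finset.mem_insert, Finset.mem_singleton]
    exact ⟨h3 y, fun h => h.elim (fun e => e ▸ h1) (fun e => e ▸ h2)⟩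
  have hd : G.degree x = (G.neighborFinset x).card := rfl
  rw [hd, hset, Finset.card_pair hab]

private lemma degree_ge_three (G : SimpleGraph V) [DecidableRel G.Adj] {x α β γ : V}
    (hab : α ≠ β) (hag : α ≠ γ) (hbg : β ≠ γ)
    (h1 : G.Adj x α) (h2 : G.Adj x β) (h3 : G.Adj x γ) : 3 ≤ G.degree x := by
  have hsub : ({α, β, γ} : Finset V) ⊆ G.neighborFinset x := by
    intro y hy
    simp only [Finset.mem_insert, Finset.mem_singleton] at hy
    rcases hy with rfl | rfl | rfl <;> simp [SimpleGraph.mem_neighborFinset, h1, h2, h3]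
  have hcard : ({α, β, γ} : Finset V).card = 3 := by
    rw [Finset.card_insert_of_notMem (by simp [hab, hag]),
        Finset.card_insert_of_notMem (by simp [hbg]), Finset.card_singleton]
  have hd : G.degree x = (G.neighborFinset x).card := rfl
  rw [hd, ← hcard]
  exact Finset.card_le_card hsub

private lemma color_alt (G : SimpleGraph V) (v : ℕ → V) (n : ℕ)
    (hadj : ∀ i, i + 1 < n → G.Adj (v i) (v (i + 1))) (C : G.Coloring (Fin 2)) :
    ∀ t c, c + t < n → (C (v (c + t)) = C (v c) ↔ Even t) := by
  intro t
  induction t with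
  | zero => intro c _; simp
  | succ m ih =>
    intro c hc
    have h1 : G.Adj (v (c + m)) (v (c + m + 1)) := hadj (c + m) (by omega)
    have h2 : C (v (c + m + 1)) ≠ C (v (c + m)) := (C.valid h1).symm
    have h3 := fin2_iff (z := C (v c)) h2
    rw [show c + (m+1) = c + m + 1 from rfl, h3, ih c (by omega)]
    simp [Nat.even_add_one]

private lemma chain_range (G : SimpleGraph V) (v : ℕ → V) {n a b : ℕ} (hbn : b < n)
    (hba : G.Adj (v b) (v a))
    (hadj : ∀ i, i + 1 < n → G.Adj (v i) (v (i + 1))) :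
    ∀ m c, c + m = b → List.Chain G.Adj (v c) ((List.range' (c + 1) m).map v ++ [v a]) := by
  intro m
  induction m with
  | zero =>
    intro c hc
    have hcb : c = b := by omega
    subst hcb
    simpa using List.Chain.cons hba List.Chain.nil
  | succ m ih =>
    intro c hc
    rw [List.range'_succ]
    simp only [List.map_cons, List.cons_append]
    exact List.Chain.cons (hadj c (by omega)) (ih (c+1) (by omega))

private lemma zip_chain_mem (v : ℕ → V) (z : V) :
    ∀ (m c : ℕ),
      ((v (c + m), z) ∈ ((List.range' c (m + 1)).map v).zip ((List.range' (c + 1) m).map v ++ [z])) ∧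
      ∀ t, c ≤ t → t < c + m →
        (v t, v (t + 1)) ∈ ((List.range' c (m + 1)).map v).zip ((List.range' (c + 1) m).map v ++ [z]) := by
  intro m
  induction m with
  | zero =>
    intro c
    constructor
    · simp [List.range'_succ]
    · intro t h1 h2; omega
  | succ m ih =>
    intro c
    obtain ⟨ih1, ih2⟩ := ih (c+1)
    have hrw1 : List.range' c (m + 1 + 1) = c :: List.range' (c+1) (m+1) := List.range'_succ ..
    have hrw2 : List.range' (c+1) (m+1) = (c+1) :: List.range' (c+1+1) m := List.range'_succ ..
    have key : ((List.range' c (m + 1 + 1)).map v).zip ((List.range' (c + 1) (m+1)).map v ++ [z])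
        = (v c, v (c+1)) ::
          (((List.range' (c+1) (m + 1)).map v).zip ((List.range' (c+1+1) m).map v ++ [z])) := by
      conv_lhs => rw [hrw1]
      conv_lhs => rw [hrw2]
      conv_rhs => rw [hrw2]
      simp [List.zip_cons_cons]
    constructor
    · rw [key, show c + (m + 1) = (c + 1) + m from by omega]
      exact List.mem_cons_of_mem _ ih1
    · intro t h1 h2
      rw [key]
      rcases eq_or_lt_of_le h1 with rfl | hlt
      · exact List.mem_cons_self
      · exact List.mem_cons_of_mem _ (ih2 t (by omega) (by omega))

end EarProof

private theorem ear_main (G : SimpleGraph V) [DecidableRel G.Adj] (v : ℕ → V) (n : ℕ)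
    (hn : 3 ≤ n)
    (hinj : ∀ i < n, ∀ j < n, v i = v j → i = j)
    (hsurj : ∀ x : V, ∃ i < n, v i = x)
    (hcross : ∀ i j k l : ℕ, i < n → j < n → k < n → l < n →
      G.Adj (v i) (v j) → G.Adj (v k) (v l) → ¬(i < k ∧ k < j ∧ j < l))
    (hconn : G.Connected)
    (hconn' : ∀ a : V, (SimpleGraph.induce {w | w ≠ a} G).Connected)
    (hbip : G.Colorable 2) (hnc : ¬ IsCycleGraph G) :
    ∃ (u : V) (l : List V), l ≠ [] ∧ (u :: l).Nodup ∧ (4 ≤ (u :: l).length ∧ Even (u :: l).length) ∧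
      List.Chain G.Adj u (l ++ [u]) ∧
      (∀ x ∈ u :: l, ∀ y ∈ u :: l, G.Adj x y →
        ((x, y) ∈ (u :: l).zip (l ++ [u]) ∨ (y, x) ∈ (u :: l).zip (l ++ [u]))) ∧
      (∀ x ∈ l.dropLast, G.degree x = 2) ∧
      3 ≤ G.degree u ∧ ∀ h : l ≠ [], 3 ≤ G.degree (l.getLast h) := by
  classical
  obtain ⟨C⟩ := hbip
  have hadj : ∀ i, i + 1 < n → G.Adj (v i) (v (i + 1)) :=
    consec_adj G v n hinj hsurj hcross hconn hconn'
  have hwrap : G.Adj (v 0) (v (n - 1)) :=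
    wrap_adj G v n hn hinj hsurj hcross hconn hconn'
  by_cases hlong : ∃ j k, j < n ∧ k < n ∧ j + 2 ≤ k ∧ G.Adj (v j) (v k) ∧ ¬(j = 0 ∧ k = n - 1)
  case neg =>
    exfalso
    apply hnc
    refine ⟨hconn, fun x => ?_⟩
    obtain ⟨i, hi, rfl⟩ := hsurj x
    push_neg at hlong
    have hcls : ∀ k, k < n → G.Adj (v i) (v k) →
        k = i + 1 ∨ i = k + 1 ∨ (i = 0 ∧ k = n - 1) ∨ (k = 0 ∧ i = n - 1) := by
      intro k hk hik
      rcases lt_trichotomy i k with h | h | h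
      · by_cases h2 : k = i + 1
        · exact Or.inl h2
        · exact Or.inr (Or.inr (Or.inl (hlong i k hi hk (by omega) hik)))
      · exact absurd hik (by rw [h]; exact G.loopless.irrefl _)
      · by_cases h2 : i = k + 1
        · exact Or.inr (Or.inl h2)
        · exact Or.inr (Or.inr (Or.inr (hlong k i hk hi (by omega) hik.symm)))
    by_cases hi0 : i = 0
    · subst hi0
      apply degree_eq_two G (α := v 1) (β := v (n-1))
      · intro h; have := hinj 1 (by omega) (n-1) (by omega) h; omega
      · exact hadj 0 (by omega)
      · exact hwrap
      · intro y hy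
        obtain ⟨k, hk, rfl⟩ := hsurj y
        rcases hcls k hk hy with h | h | h | h
        · left; rw [h]
        · omega
        · right; rw [h.2]
        · omega
    · by_cases hin1 : i = n - 1
      · subst hin1
        apply degree_eq_two G (α := v (n-2)) (β := v 0)
        · intro h; have := hinj (n-2) (by omega) 0 (by omega) h; omega
        · have h := hadj (n-2) (by omega)
          rw [show n - 2 + 1 = n - 1 from by omega] at h
          exact h.symm
        · exact hwrap.symm
        · intro y hy
          obtain ⟨k, hk, rfl⟩ := hsurj y
          rcases hcls k hk hy with h | h | h | h
          · omega
          · left; rw [show n - 2 = k from by omega]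
          · omega
          · right; rw [h.1]
      · apply degree_eq_two G (α := v (i-1)) (β := v (i+1))
        · intro h; have := hinj (i-1) (by omega) (i+1) (by omega) h; omega
        · have h := hadj (i-1) (by omega)
          rw [show i - 1 + 1 = i from by omega] at h
          exact h.symm
        · exact hadj i (by omega)
        · intro y hy
          obtain ⟨k, hk, rfl⟩ := hsurj y
          rcases hcls k hk hy with h | h | h | h
          · right; rw [h]
          · left; rw [show i - 1 = k from by omega]
          · omega
          · omega
  case pos =>
    obtain ⟨j0, k0, hj0, hk0, hjk0, hadj0, hnw0⟩ := hlong
    have hex : ∃ w, ∃ j k, j < n ∧ k < n ∧ j + 2 ≤ k ∧ G.Adj (v j) (v k) ∧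
        ¬(j = 0 ∧ k = n - 1) ∧ k - j = w :=
      ⟨k0 - j0, j0, k0, hj0, hk0, hjk0, hadj0, hnw0, rfl⟩
    obtain ⟨a, b, han, hbn, hab2, hadjab, hnw, hweq⟩ := Nat.find_spec hex
    have hmin : ∀ j k, j < n → k < n → j + 2 ≤ k → G.Adj (v j) (v k) →
        ¬(j = 0 ∧ k = n - 1) → b - a ≤ k - j := by
      intro j k h1 h2 h3 h4 h5
      have := Nat.find_min' hex ⟨j, k, h1, h2, h3, h4, h5, rfl⟩
      omega
    have hchord : ∀ j k, a ≤ j → j < k → k ≤ b → G.Adj (v j) (v k) →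
        k = j + 1 ∨ (j = a ∧ k = b) := by
      intro j k h1 h2 h3 h4
      by_cases h5 : k = j + 1
      · exact Or.inl h5
      · right
        have h6 : ¬(j = 0 ∧ k = n - 1) := by
          rintro ⟨rfl, rfl⟩
          exact hnw ⟨by omega, by omega⟩
        have := hmin j k (by omega) (by omega) (by omega) h4 h6
        omega
    have hint : ∀ j, a < j → j < b → ∀ k, k < n → G.Adj (v j) (v k) → k = j - 1 ∨ k = j + 1 := by
      intro j h1 h2 k hk h4
      have hjn : j < n := by omega
      rcases lt_trichotomy k j with h | h | h
      · rcases lt_trichotomy k a with g | g | g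
        · exact absurd ⟨g, h1, h2⟩ (hcross k j a b hk hjn han hbn h4.symm hadjab)
        · subst g
          rcases hchord k j le_rfl h (by omega) h4.symm with e | e
          · left; omega
          · omega
        · rcases hchord k j (by omega) h (by omega) h4.symm with e | e
          · left; omega
          · omega
      · exact absurd h4 (by rw [h]; exact G.loopless.irrefl _)
      · rcases lt_trichotomy k b with g | g | g
        · rcases hchord j k (by omega) h (by omega) h4 with e | e
          · right; omega
          · omega
        · rcases hchord j k (by omega) h (by omega) h4 with e | e
          · right; omega
          · omega
        · exact absurd ⟨h1, h2, g⟩ (hcross a b j k han hbn hjn hk hadjab h4)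
    have hodd : Odd (b - a) := by
      rw [← Nat.not_even_iff_odd]
      intro he
      have h1 := (color_alt G v n hadj C (b - a) a (by omega)).mpr he
      rw [show a + (b - a) = b from by omega] at h1
      exact C.valid hadjab h1.symm
    obtain ⟨mm, hmm⟩ := hodd
    have hL3 : 3 ≤ b - a := by omega
    have hbal : a + (b - a) = b := by omega
    have hcons : v a :: (List.range' (a+1) (b-a)).map v = (List.range' a (b-a+1)).map v := by
      rw [List.range'_succ, List.map_cons]
    have hsplit : List.range' (a+1) (b-a) = List.range' (a+1) (b-a-1) ++ [b] := by
      have h1 : b - a = (b - a - 1) + 1 := by omega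
      conv_lhs => rw [h1]
      rw [List.range'_concat]
      rw [show a + 1 + 1 * (b - a - 1) = b from by omega]
    have hdec : (List.range' (a+1) (b-a)).map v = (List.range' (a+1) (b-a-1)).map v ++ [v b] := by
      rw [hsplit, List.map_append, List.map_singleton]
    refine ⟨v a, (List.range' (a+1) (b-a)).map v, ?_, ?_, ⟨?_, ?_⟩, ?_, ?_, ?_, ?_, ?_⟩
    · apply List.ne_nil_of_length_pos
      simp only [List.length_map, List.length_range']
      omega
    · rw [hcons]
      apply List.Nodup.map_on
      · intro x hx y hy e
        rw [List.mem_range'_1] at hx hy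
        exact hinj x (by omega) y (by omega) e
      · exact List.nodup_range' 1 (by omega)
    · simp only [List.length_cons, List.length_map, List.length_range']
      omega
    · simp only [List.length_cons, List.length_map, List.length_range']
      rw [Nat.even_add_one]
      intro he
      exact (Nat.not_even_iff_odd.mpr ⟨mm, hmm⟩) he
    · exact chain_range G v hbn hadjab.symm hadj (b-a) a hbal
    · intro x hx y hy hxy
      have hmem : ∀ z, z ∈ v a :: (List.range' (a+1) (b-a)).map v →
          ∃ j, a ≤ j ∧ j ≤ b ∧ v j = z := by
        intro z hz
        rw [hcons] at hz
        obtain ⟨j, hj, rfl⟩ := List.mem_map.mp hz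
        rw [List.mem_range'_1] at hj
        exact ⟨j, by omega, by omega, rfl⟩
      obtain ⟨j, hj1, hj2, rfl⟩ := hmem x hx
      obtain ⟨k, hk1, hk2, rfl⟩ := hmem y hy
      have hzz := zip_chain_mem v (v a) (b - a) a
      rw [hcons]
      rcases lt_trichotomy j k with h | h | h
      · rcases hchord j k hj1 h hk2 hxy with e | ⟨e1, e2⟩
        · subst e
          exact Or.inl (hzz.2 j hj1 (by omega))
        · subst e1; subst e2
          have h1 := hzz.1
          rw [hbal] at h1
          exact Or.inr h1
      · exact absurd hxy (by rw [h]; exact G.loopless.irrefl _)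
      · rcases hchord k j hk1 h hj2 hxy.symm with e | ⟨e1, e2⟩
        · subst e
          exact Or.inr (hzz.2 k hk1 (by omega))
        · subst e1; subst e2
          have h1 := hzz.1
          rw [hbal] at h1
          exact Or.inl h1
    · intro x hx
      rw [hdec, List.dropLast_concat] at hx
      obtain ⟨t, ht, rfl⟩ := List.mem_map.mp hx
      rw [List.mem_range'_1] at ht
      have ht2 : a < t ∧ t < b := by omega
      apply degree_eq_two G (α := v (t-1)) (β := v (t+1))
      · intro h; have := hinj (t-1) (by omega) (t+1) (by omega) h; omega
      · have h := hadj (t-1) (by omega)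
        rw [show t - 1 + 1 = t from by omega] at h
        exact h.symm
      · exact hadj t (by omega)
      · intro y hy
        obtain ⟨k, hk, rfl⟩ := hsurj y
        rcases hint t ht2.1 ht2.2 k hk hy with h | h
        · left; rw [h]
        · right; rw [h]
    · by_cases ha0 : a = 0
      · subst ha0
        have hbn1 : b < n - 1 := by
          rcases lt_or_eq_of_le (by omega : b ≤ n - 1) with h | h
          · exact h
          · exact absurd ⟨rfl, h⟩ hnw
        apply degree_ge_three G (α := v 1) (β := v b) (γ := v (n-1))
        · intro h; have := hinj 1 (by omega) b hbn h; omega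
        · intro h; have := hinj 1 (by omega) (n-1) (by omega) h; omega
        · intro h; have := hinj b hbn (n-1) (by omega) h; omega
        · exact hadj 0 (by omega)
        · exact hadjab
        · exact hwrap
      · apply degree_ge_three G (α := v (a-1)) (β := v (a+1)) (γ := v b)
        · intro h; have := hinj (a-1) (by omega) (a+1) (by omega) h; omega
        · intro h; have := hinj (a-1) (by omega) b hbn h; omega
        · intro h; have := hinj (a+1) (by omega) b hbn h; omega
        · have h := hadj (a-1) (by omega)
          rw [show a - 1 + 1 = a from by omega] at h
          exact h.symm
        · exact hadj a (by omega)
        · exact hadjab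
    · intro hne
      have hgl : ∀ (m : List V) (hm : m ≠ []),
          m = (List.range' (a+1) (b-a-1)).map v ++ [v b] → m.getLast hm = v b := by
        rintro m hm rfl
        exact List.getLast_concat
      rw [hgl _ hne hdec]
      by_cases hbn1 : b = n - 1
      · have ha0 : a ≠ 0 := fun h => hnw ⟨h, hbn1⟩
        apply degree_ge_three G (α := v 0) (β := v (b-1)) (γ := v a)
        · intro h; have := hinj 0 (by omega) (b-1) (by omega) h; omega
        · intro h; have := hinj 0 (by omega) a han h; omega
        · intro h; have := hinj (b-1) (by omega) a han h; omega
        · have h : G.Adj (v 0) (v b) := by rw [hbn1]; exact hwrap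
          exact h.symm
        · have h := hadj (b-1) (by omega)
          rw [show b - 1 + 1 = b from by omega] at h
          exact h.symm
        · exact hadjab.symm
      · apply degree_ge_three G (α := v (b+1)) (β := v (b-1)) (γ := v a)
        · intro h; have := hinj (b+1) (by omega) (b-1) (by omega) h; omega
        · intro h; have := hinj (b+1) (by omega) a han h; omega
        · intro h; have := hinj (b-1) (by omega) a han h; omega
        · exact hadj b (by omega)
        · have h := hadj (b-1) (by omega)
          rw [show b - 1 + 1 = b from by omega] at h
          exact h.symm
        · exact hadjab.symm

theorem stmt13 (G : SimpleGraph V) [DecidableRel G.Adj]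
    (h2 : TwoConnected G) (hop : Outerplanar G) (hbip : G.Colorable 2)
    (hnc : ¬ IsCycleGraph G) :
    ∃ (u : V) (l : List V), l ≠ [] ∧ (u :: l).Nodup ∧ (4 ≤ (u :: l).length ∧ Even (u :: l).length) ∧
      List.Chain G.Adj u (l ++ [u]) ∧
      (∀ x ∈ u :: l, ∀ y ∈ u :: l, G.Adj x y →
        ((x, y) ∈ (u :: l).zip (l ++ [u]) ∨ (y, x) ∈ (u :: l).zip (l ++ [u]))) ∧
      (∀ x ∈ l.dropLast, G.degree x = 2) ∧
      3 ≤ G.degree u ∧ ∀ h : l ≠ [], 3 ≤ G.degree (l.getLast h) := by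
  classical
  obtain ⟨p, hpinj, hpcross⟩ := hop
  obtain ⟨hcard, hconn, hconn'⟩ := h2
  letI : LinearOrder V := LinearOrder.lift' p hpinj
  have hlt : ∀ x y : V, x < y ↔ p x < p y := fun x y => Iff.rfl
  have hn : 3 ≤ Fintype.card V := hcard
  have hn0 : 0 < Fintype.card V := by omega
  let e : Fin (Fintype.card V) ≃o V := monoEquivOfFin V rfl
  let v : ℕ → V := fun i => e ⟨i % Fintype.card V, Nat.mod_lt i hn0⟩
  have hinj : ∀ i < Fintype.card V, ∀ j < Fintype.card V, v i = v j → i = j := by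
    intro i hi j hj hvij
    have h1 : (⟨i % Fintype.card V, Nat.mod_lt i hn0⟩ : Fin (Fintype.card V)) =
        ⟨j % Fintype.card V, Nat.mod_lt j hn0⟩ := e.injective hvij
    have h2 : i % Fintype.card V = j % Fintype.card V := by
      simpa using h1
    rwa [Nat.mod_eq_of_lt hi, Nat.mod_eq_of_lt hj] at h2
  have hsurj : ∀ x : V, ∃ i < Fintype.card V, v i = x := by
    intro x
    refine ⟨(e.symm x : Fin (Fintype.card V)).val, (e.symm x).isLt, ?_⟩
    show e ⟨(e.symm x).val % Fintype.card V, _⟩ = x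
    have h1 : (⟨(e.symm x).val % Fintype.card V, Nat.mod_lt _ hn0⟩ : Fin (Fintype.card V)) =
        e.symm x := Fin.ext (Nat.mod_eq_of_lt (e.symm x).isLt)
    rw [h1, OrderIso.apply_symm_apply]
  have hvlt : ∀ i j, i < Fintype.card V → j < Fintype.card V → i < j → p (v i) < p (v j) := by
    intro i j hi hj hij
    have h1 : v i < v j := by
      apply e.strictMono
      rw [Fin.mk_lt_mk]
      rwa [Nat.mod_eq_of_lt hi, Nat.mod_eq_of_lt hj]
    exact (hlt _ _).mp h1
  have hcross : ∀ i j k l : ℕ, i < Fintype.card V → j < Fintype.card V →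
      k < Fintype.card V → l < Fintype.card V →
      G.Adj (v i) (v j) → G.Adj (v k) (v l) → ¬(i < k ∧ k < j ∧ j < l) := by
    rintro i j k l hi hj hk hl h1 h2 ⟨g1, g2, g3⟩
    exact hpcross (v i) (v j) (v k) (v l) h1 h2
      ⟨hvlt i k hi hk g1, hvlt k j hk hj g2, hvlt j l hj hl g3⟩
  exact ear_main G v (Fintype.card V) hn hinj hsurj hcross hconn hconn' hbip hnc
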